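/- Fix integers 0 < p < q, set θ = (−p, p−q, q) and θ_0 = (−p, p). The map F induces a well-defined bijection from the set of G-orbits of θ-stable representations R = (a_0,…,a_n,ε) of Q with dimension vector (1,1,1) satisfying ε ≠ 0, onto the set of G_0-orbits of θ_0-stable representations (b_0,…,b_n) of the (n+1)-Kronecker quiver Q_0 satisfying b_i ≠ 0 for at least one i with m+1 ≤ i ≤ n. -/

import Mathlib

/-- A subset `S` of the vertex set `{1,2,3}` of the quiver `Q` (encoded as `Fin 3`, with
`0 ↦` vertex 1, `1 ↦` vertex 2, `2 ↦` vertex 3; arrows `x_0,…,x_m : 1 → 3`, `e : 1 → 2`,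
`x_{m+1},…,x_n : 2 → 3`) is a subrepresentation support of the representation
`R = ((a_0,…,a_n), ε)` with dimension vector `(1,1,1)` if every arrow with nonzero scalar and
source in `S` has target in `S`. -/
def QSupport {k : Type*} [Field k] (n m : ℕ) (R : (Fin (n + 1) → k) × k)
    (S : Finset (Fin 3)) : Prop :=
  (∀ i : Fin (n + 1), (i : ℕ) ≤ m → R.1 i ≠ 0 → (0 : Fin 3) ∈ S → (2 : Fin 3) ∈ S) ∧
  (R.2 ≠ 0 → (0 : Fin 3) ∈ S → (1 : Fin 3) ∈ S) ∧
  (∀ i : Fin (n + 1), m < (i : ℕ) → R.1 i ≠ 0 → (1 : Fin 3) ∈ S → (2 : Fin 3) ∈ S)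

/-- `θ`-semistability for representations of `Q` with dimension vector `(1,1,1)`. -/
def QSemistable {k : Type*} [Field k] (n m : ℕ) (θ : Fin 3 → ℤ)
    (R : (Fin (n + 1) → k) × k) : Prop :=
  ∀ S : Finset (Fin 3), QSupport n m R S → 0 ≤ ∑ v ∈ S, θ v

/-- `θ`-stability for representations of `Q` with dimension vector `(1,1,1)`. -/
def QStable {k : Type*} [Field k] (n m : ℕ) (θ : Fin 3 → ℤ)
    (R : (Fin (n + 1) → k) × k) : Prop :=
  QSemistable n m θ R ∧
  ∀ S : Finset (Fin 3), QSupport n m R S → S.Nonempty → S ≠ Finset.univ →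
    0 < ∑ v ∈ S, θ v

/-- Subrepresentation support for the `(n+1)`-Kronecker quiver `Q₀` (vertices `Fin 2`,
`0 ↦` vertex 1, `1 ↦` vertex 2; arrows `x_0,…,x_n : 1 → 2`). -/
def KronSupport {k : Type*} [Field k] (n : ℕ) (a : Fin (n + 1) → k)
    (S : Finset (Fin 2)) : Prop :=
  ∀ i : Fin (n + 1), a i ≠ 0 → (0 : Fin 2) ∈ S → (1 : Fin 2) ∈ S

/-- `θ`-semistability for the `(n+1)`-Kronecker quiver, dimension vector `(1,1)`. -/
def KronSemistable {k : Type*} [Field k] (n : ℕ) (θ : Fin 2 → ℤ)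
    (a : Fin (n + 1) → k) : Prop :=
  ∀ S : Finset (Fin 2), KronSupport n a S → 0 ≤ ∑ v ∈ S, θ v

/-- `θ`-stability for the `(n+1)`-Kronecker quiver, dimension vector `(1,1)`. -/
def KronStable {k : Type*} [Field k] (n : ℕ) (θ : Fin 2 → ℤ)
    (a : Fin (n + 1) → k) : Prop :=
  KronSemistable n θ a ∧
  ∀ S : Finset (Fin 2), KronSupport n a S → S.Nonempty → S ≠ Finset.univ →
    0 < ∑ v ∈ S, θ v

/-- The action of `G = (kˣ)³` on representations of `Q` with dimension vector `(1,1,1)`: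
`(g₁,g₂,g₃)·((a_i), ε) = ((g₃g₁⁻¹ a_i)_{i ≤ m}, (g₃g₂⁻¹ a_i)_{i > m}, g₂g₁⁻¹ ε)`. -/
def Gact {k : Type*} [Field k] (n m : ℕ) (g : kˣ × kˣ × kˣ)
    (R : (Fin (n + 1) → k) × k) : (Fin (n + 1) → k) × k :=
  (fun i => if (i : ℕ) ≤ m then (g.2.2 : k) * (g.1 : k)⁻¹ * R.1 i
            else (g.2.2 : k) * (g.2.1 : k)⁻¹ * R.1 i,
   (g.2.1 : k) * (g.1 : k)⁻¹ * R.2)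

/-- The action of `G₀ = (kˣ)²` on representations of the `(n+1)`-Kronecker quiver with
dimension vector `(1,1)`: `(g₁,g₂)·(b_i) = (g₂g₁⁻¹ b_i)`. -/
def G0act {k : Type*} [Field k] (n : ℕ) (g : kˣ × kˣ) (b : Fin (n + 1) → k) :
    Fin (n + 1) → k :=
  fun i => (g.2 : k) * (g.1 : k)⁻¹ * b i

/-- The map `F : k^{n+2} → k^{n+1}`, `F((a_0,…,a_n), ε) = (a_0,…,a_m, εa_{m+1},…,εa_n)`. -/
def Fmap {k : Type*} [Field k] (n m : ℕ) (R : (Fin (n + 1) → k) × k) :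
    Fin (n + 1) → k :=
  fun i => if (i : ℕ) ≤ m then R.1 i else R.2 * R.1 i


section Aux

variable {k : Type*} [Field k]

lemma finsetFin2 (S : Finset (Fin 2)) :
    S = ∅ ∨ S = {0} ∨ S = {1} ∨ S = Finset.univ := by revert S; decide

lemma finsetFin3 (S : Finset (Fin 3)) :
    S = ∅ ∨ S = {0} ∨ S = {1} ∨ S = {2} ∨ S = {0,1} ∨ S = {0,2} ∨ S = {1,2} ∨
      S = Finset.univ := by revert S; decide

lemma fwd (n m : ℕ) (p q : ℤ) (hp : 0 < p) (hpq : p < q)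
    (R : (Fin (n + 1) → k) × k) (hR : QStable n m ![-p, p - q, q] R) (hε : R.2 ≠ 0) :
    KronStable n ![-p, p] (Fmap n m R) ∧
      ∃ i : Fin (n + 1), m < (i : ℕ) ∧ Fmap n m R i ≠ 0 := by
  have hex : ∃ i : Fin (n + 1), m < (i : ℕ) ∧ Fmap n m R i ≠ 0 := by
    by_contra hcon
    push_neg at hcon
    have hsup : QSupport n m R ({1} : Finset (Fin 3)) := by
      refine ⟨?_, ?_, ?_⟩
      · intro i _ _ h0; exact absurd h0 (by decide)
      · intro _ h0; exact absurd h0 (by decide)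
      · intro i him hai _
        exact absurd (hcon i him) (by simp [Fmap, Nat.not_le.mpr him, hε, hai])
    have := hR.2 {1} hsup ⟨1, by decide⟩ (by decide)
    simp at this; omega
  refine ⟨⟨?_, ?_⟩, hex⟩
  · intro S hS
    rcases finsetFin2 S with h | h | h | h <;> subst h <;> simp
    · obtain ⟨i, _, hi⟩ := hex
      exact absurd (hS i hi (by decide)) (by decide)
    · omega
  · intro S hS hne hneuniv
    rcases finsetFin2 S with h | h | h | h <;> subst h
    · exact absurd hne (by simp)
    · obtain ⟨i, _, hi⟩ := hex
      exact absurd (hS i hi (by decide)) (by decide)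
    · simpa using hp
    · exact absurd rfl hneuniv

lemma bwd (n m : ℕ) (p q : ℤ) (hp : 0 < p) (hpq : p < q)
    (b : Fin (n + 1) → k) (hb : ∃ i : Fin (n + 1), m < (i : ℕ) ∧ b i ≠ 0) :
    QStable n m ![-p, p - q, q] ((b, 1) : (Fin (n + 1) → k) × k) := by
  obtain ⟨i, him, hbi⟩ := hb
  have key : ∀ S : Finset (Fin 3), QSupport n m ((b, 1) : (Fin (n + 1) → k) × k) S →
      S = ∅ ∨ S = {2} ∨ S = {1,2} ∨ S = Finset.univ := by
    intro S hS
    rcases finsetFin3 S with h | h | h | h | h | h | h | h <;> subst h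
    · exact Or.inl rfl
    · exact absurd (hS.2.1 one_ne_zero (by decide)) (by decide)
    · exact absurd (hS.2.2 i him hbi (by decide)) (by decide)
    · exact Or.inr (Or.inl rfl)
    · exact absurd (hS.2.2 i him hbi (by decide)) (by decide)
    · exact absurd (hS.2.1 one_ne_zero (by decide)) (by decide)
    · exact Or.inr (Or.inr (Or.inl rfl))
    · exact Or.inr (Or.inr (Or.inr rfl))
  constructor
  · intro S hS
    rcases key S hS with h | h | h | h <;> subst h
    · simp
    · simp; omega
    · simp; omega
    · simp [Fin.sum_univ_three]; omega
  · intro S hS hne hneuniv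
    rcases key S hS with h | h | h | h
    · exact absurd hne (by simp [h])
    · subst h; simpa using hp.trans hpq
    · subst h; simpa using hp
    · exact absurd h hneuniv

lemma g0equiv (n : ℕ) (P : (Fin (n + 1) → k) → Prop) :
    Equivalence (fun b₁ b₂ : {b : Fin (n + 1) → k // P b} =>
      ∃ g : kˣ × kˣ, G0act n g b₁.1 = b₂.1) := by
  constructor
  · intro b; exact ⟨(1, 1), by funext j; simp [G0act]⟩
  · rintro b₁ b₂ ⟨g, hg⟩
    refine ⟨(g.2, g.1), ?_⟩
    funext j
    have := congrFun hg j
    simp only [G0act] at this ⊢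
    rw [← this]
    field_simp
  · rintro b₁ b₂ b₃ ⟨g, hg⟩ ⟨g', hg'⟩
    refine ⟨(g.1 * g'.1, g.2 * g'.2), ?_⟩
    funext j
    have h1 := congrFun hg j
    have h2 := congrFun hg' j
    simp only [G0act] at h1 h2 ⊢
    rw [← h2, ← h1]
    push_cast
    field_simp

end Aux

/-- Fix `0 < p < q`, `θ = (−p, p−q, q)` and `θ₀ = (−p, p)`. The map `F` induces a
well-defined bijection from the set of `G`-orbits of `θ`-stable representations
`R = ((a_0,…,a_n), ε)` of `Q` with dimension vector `(1,1,1)` and `ε ≠ 0`, onto the set of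
`G₀`-orbits of `θ₀`-stable representations `(b_0,…,b_n)` of the `(n+1)`-Kronecker quiver with
`b_i ≠ 0` for at least one `i` with `m+1 ≤ i ≤ n`. -/
theorem stmt13 {k : Type*} [Field k] [IsAlgClosed k] [CharZero k]
    (n m : ℕ) (hn : 2 ≤ n) (hm : m + 2 ≤ n)
    (p q : ℤ) (hp : 0 < p) (hpq : p < q) :
    (∀ R : (Fin (n + 1) → k) × k, QStable n m ![-p, p - q, q] R → R.2 ≠ 0 →
      KronStable n ![-p, p] (Fmap n m R) ∧
        ∃ i : Fin (n + 1), m < (i : ℕ) ∧ Fmap n m R i ≠ 0) ∧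
    ∃ T : Quot (fun R₁ R₂ : {R : (Fin (n + 1) → k) × k //
            QStable n m ![-p, p - q, q] R ∧ R.2 ≠ 0} =>
          ∃ g : kˣ × kˣ × kˣ, Gact n m g R₁.1 = R₂.1) →
        Quot (fun b₁ b₂ : {b : Fin (n + 1) → k //
            KronStable n ![-p, p] b ∧ ∃ i : Fin (n + 1), m < (i : ℕ) ∧ b i ≠ 0} =>
          ∃ g : kˣ × kˣ, G0act n g b₁.1 = b₂.1),
      (∀ (R : (Fin (n + 1) → k) × k)
          (hR : QStable n m ![-p, p - q, q] R ∧ R.2 ≠ 0)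
          (hFR : KronStable n ![-p, p] (Fmap n m R) ∧
            ∃ i : Fin (n + 1), m < (i : ℕ) ∧ Fmap n m R i ≠ 0),
        T (Quot.mk _ ⟨R, hR⟩) = Quot.mk _ ⟨Fmap n m R, hFR⟩) ∧
      Function.Bijective T := by
  classical
  have fwd' : ∀ R : {R : (Fin (n + 1) → k) × k //
      QStable n m ![-p, p - q, q] R ∧ R.2 ≠ 0},
      KronStable n ![-p, p] (Fmap n m R.1) ∧
        ∃ i : Fin (n + 1), m < (i : ℕ) ∧ Fmap n m R.1 i ≠ 0 :=
    fun R => fwd n m p q hp hpq R.1 R.2.1 R.2.2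
  refine ⟨fun R hR hε => fwd n m p q hp hpq R hR hε, ?_⟩
  refine ⟨Quot.lift (fun R => Quot.mk _ ⟨Fmap n m R.1, fwd' R⟩) ?_, ?_, ?_, ?_⟩
  · -- well-definedness
    rintro R₁ R₂ ⟨g, hg⟩
    apply Quot.sound
    refine ⟨(g.1, g.2.2), ?_⟩
    funext j
    have h1 : R₂.1.1 = _ := congrArg Prod.fst hg.symm
    have h2 : R₂.1.2 = _ := congrArg Prod.snd hg.symm
    simp only [Gact] at h1 h2
    by_cases hj : (j : ℕ) ≤ m
    · simp [G0act, Fmap, hj, h1, congrFun h1 j]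
    · have := congrFun h1 j
      simp only [hj, if_false] at this
      simp only [G0act, Fmap, hj, if_false, this, h2]
      field_simp
  · -- the formula for T
    intro R hR hFR
    exact congrArg _ (Subtype.ext rfl)
  · -- injectivity
    intro x y
    induction x using Quot.ind with | _ R₁ => ?_
    induction y using Quot.ind with | _ R₂ => ?_
    intro h
    have h' := ((g0equiv n _).eqvGen_iff).mp (Quot.eqvGen_exact h)
    obtain ⟨g₀, hg₀⟩ := h'
    apply Quot.sound
    have hε₁ := R₁.2.2
    have hε₂ := R₂.2.2
    set c : kˣ := g₀.2 * g₀.1⁻¹ with hc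
    refine ⟨(1, Units.mk0 R₂.1.2 hε₂ * (Units.mk0 R₁.1.2 hε₁)⁻¹, c), ?_⟩
    have hpt : ∀ j, (c : k) * Fmap n m R₁.1 j = Fmap n m R₂.1 j := by
      intro j
      have := congrFun hg₀ j
      simp only [G0act] at this
      rw [← this, hc]; push_cast; ring
    refine Prod.ext ?_ ?_
    · funext j
      have := hpt j
      by_cases hj : (j : ℕ) ≤ m
      · simpa [Gact, Fmap, hj] using this
      · simp only [Fmap, hj, if_false] at this
        simp only [Gact, hj, if_false]
        push_cast
        simp only [Units.val_mk0]
        field_simp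
        linear_combination this
    · simp [Gact]
      field_simp
  · -- surjectivity
    intro y
    induction y using Quot.ind with | _ b => ?_
    obtain ⟨b, hb⟩ := b
    have hQ : QStable n m ![-p, p - q, q] ((b, 1) : (Fin (n + 1) → k) × k) :=
      bwd n m p q hp hpq b hb.2
    have hFb : Fmap n m ((b, 1) : (Fin (n + 1) → k) × k) = b := by
      funext j; simp [Fmap]
    refine ⟨Quot.mk _ ⟨((b, 1) : (Fin (n + 1) → k) × k), hQ, one_ne_zero⟩, ?_⟩
    exact congrArg _ (Subtype.ext hFb)
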